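/- arXiv:1202.6089 — 2 statements merged into one kernel-verified Lean document; each statement's English description precedes it below -/
import Mathlib

section
/- Let P be a partition of a positive integer n, let b_1 < b_2 < … < b_r be positive integers with b_{i+1} ≥ b_i + 2 for 1 ≤ i < r, let u ∈ {1, …, r}, and let a = b_u + 1; if u < r assume moreover a ≤ b_{u+1} − 2. Then the sequence b_1, …, b_{u−1}, a, b_{u+1}, …, b_r defines an r-U-chain in D_P and, as integers, |U_{b_1,…,b_{u−1},a,b_{u+1},…,b_r}| − |U_{b_1,…,b_r}| = (a − 2u + 1)·(n_{a+1} − n_{a−1}). -/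
/-!
Common definitions for the poset `D_P` attached to a partition `P` of `n`,
its `U`-chains, the quantity `s(P,a)` (cardinality of a simple `U`-chain),
and `U`-processes, following Khatami, "The poset of the nilpotent commutator
of a nilpotent matrix".

A partition of `n` is encoded by its multiplicity function `np : ℕ →₀ ℕ`
(`np p` = number of parts equal to `p`), with `np 0 = 0` and `Σ p·np p = n`.
-/

/-- Vertices are triples `(u, p, k)`. -/
abbrev Vtx : Type := ℕ × ℕ × ℕ

/-- `np` is the multiplicity function of a partition of `n`. -/
def IsPartitionOf (n : ℕ) (np : ℕ →₀ ℕ) : Prop :=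
  np 0 = 0 ∧ (np.sum fun p m => p * m) = n

/-- The vertex set of the diagram `D_P`: triples `(u,p,k)` with
`1 ≤ u ≤ p` and `1 ≤ k ≤ np p`. -/
def vertexSet (np : ℕ →₀ ℕ) : Set Vtx :=
  {v | 1 ≤ v.1 ∧ v.1 ≤ v.2.1 ∧ 1 ≤ v.2.2 ∧ v.2.2 ≤ np v.2.1}

/-- The set `S_i` for the value `a`:
`S_i = {(u,p,k) : p ∈ {a, a+1}, i ≤ u ≤ p−i+1} ∪ {(u,p,k) : p > a+1, u ∈ {i, p−i+1}}`,
a subset of the vertex set of `D_P`.  (The condition `u ≤ p - i + 1` is written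
as `u + i ≤ p + 1` to avoid truncated subtraction.) -/
def Sset (np : ℕ →₀ ℕ) (i a : ℕ) : Set Vtx :=
  {v ∈ vertexSet np |
    ((v.2.1 = a ∨ v.2.1 = a + 1) ∧ i ≤ v.1 ∧ v.1 + i ≤ v.2.1 + 1) ∨
    (a + 1 < v.2.1 ∧ (v.1 = i ∨ v.1 + i = v.2.1 + 1))}

/-- The `r`-`U`-chain `U_{b 1, …, b r} = S_1 ∪ ⋯ ∪ S_r` in `D_P`. -/
def UChain (np : ℕ →₀ ℕ) (b : ℕ → ℕ) (r : ℕ) : Set Vtx :=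
  ⋃ i ∈ Set.Icc 1 r, Sset np i (b i)

/-- `b 1 < b 2 < ⋯ < b r` are positive with consecutive differences at least `2`. -/
def ValidSeq (b : ℕ → ℕ) (r : ℕ) : Prop :=
  (∀ i, 1 ≤ i → i ≤ r → 1 ≤ b i) ∧ ∀ i, 1 ≤ i → i < r → b i + 2 ≤ b (i + 1)

/-- `s(P,a) = a·n_a + (a+1)·n_{a+1} + 2·Σ_{p>a+1} n_p`, the cardinality of the
simple `U`-chain `U_a` in `D_P`. -/
def sVal (np : ℕ →₀ ℕ) (a : ℕ) : ℕ :=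
  a * np a + (a + 1) * np (a + 1) +
    2 * ∑ p ∈ np.support.filter (fun p => a + 1 < p), np p

/-- `a` is optimal for `P`: `U_a` is a maximum simple `U`-chain in `D_P`. -/
def OptimalFor (np : ℕ →₀ ℕ) (a : ℕ) : Prop :=
  1 ≤ a ∧ ∀ c, 1 ≤ c → sVal np c ≤ sVal np a

/-- `p` is a part of the partition with multiplicity function `np`. -/
def IsPart (np : ℕ →₀ ℕ) (p : ℕ) : Prop := 0 < p ∧ 0 < np p

/-- The covering relation of the poset `D_P`:  `Cov np x y` means `y` covers `x`.
(i)  for consecutive parts `q < p` and `1 ≤ u ≤ q`, `(u, p, np p)` is covered by `(u, q, 1)`;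
(ii) for consecutive parts `p < q` and `1 ≤ u ≤ p`, `(u, p, np p)` is covered by
     `(u + q − p, q, 1)`;
(iii) for a part `p`, `1 ≤ u ≤ p`, `1 ≤ k < np p`, `(u,p,k)` is covered by `(u,p,k+1)`;
(iv) for an isolated part `p` (neither `p−1` nor `p+1` is a part) and `1 ≤ u < p`,
     `(u, p, np p)` is covered by `(u+1, p, 1)`. -/
def Cov (np : ℕ →₀ ℕ) (x y : Vtx) : Prop :=
  (∃ p q u, IsPart np p ∧ IsPart np q ∧ q < p ∧
      (∀ t, q < t → t < p → ¬ IsPart np t) ∧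
      1 ≤ u ∧ u ≤ q ∧ x = (u, p, np p) ∧ y = (u, q, 1)) ∨
  (∃ p q u, IsPart np p ∧ IsPart np q ∧ p < q ∧
      (∀ t, p < t → t < q → ¬ IsPart np t) ∧
      1 ≤ u ∧ u ≤ p ∧ x = (u, p, np p) ∧ y = (u + (q - p), q, 1)) ∨
  (∃ p u k, IsPart np p ∧ 1 ≤ u ∧ u ≤ p ∧ 1 ≤ k ∧ k < np p ∧
      x = (u, p, k) ∧ y = (u, p, k + 1)) ∨
  (∃ p u, IsPart np p ∧ ¬ IsPart np (p - 1) ∧ ¬ IsPart np (p + 1) ∧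
      1 ≤ u ∧ u < p ∧ x = (u, p, np p) ∧ y = (u + 1, p, 1))

/-- The partial order of `D_P`: reflexive–transitive closure of the covering relation. -/
def leD (np : ℕ →₀ ℕ) : Vtx → Vtx → Prop := Relation.ReflTransGen (Cov np)

/-- A chain in `D_P`: a subset of the vertex set that is totally ordered by `leD`. -/
def IsChainD (np : ℕ →₀ ℕ) (C : Set Vtx) : Prop :=
  C ⊆ vertexSet np ∧ ∀ x ∈ C, ∀ y ∈ C, leD np x y ∨ leD np y x

/-- `u_r(P)`: the maximum cardinality of an `r`-`U`-chain in `D_P`. -/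
noncomputable def uMax (np : ℕ →₀ ℕ) (r : ℕ) : ℕ :=
  sSup {m | ∃ b : ℕ → ℕ, ValidSeq b r ∧ (UChain np b r).ncard = m}

/-- The relabeling injection `ι : D_{P'} → D_P` attached to removing `U_a`. -/
def iotaMap (a : ℕ) (v : Vtx) : Vtx :=
  if v.2.1 < a then v else (v.1 + 1, v.2.1 + 2, v.2.2)

/-- `iotaComp aa i = ι_1 ∘ ⋯ ∘ ι_i`, where `ι_j` is the relabeling map for `aa j`. -/
def iotaComp (aa : ℕ → ℕ) : ℕ → Vtx → Vtx
  | 0 => id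
  | i + 1 => iotaComp aa i ∘ iotaMap (aa (i + 1))

/-- `(P_1, …, P_{r+1}; a_1, …, a_r)` is a `U`-process of length `r` for `P`:
`P_1 = P`, each `a_i` is optimal for `P_i`, and `P_{i+1}` is obtained from `P_i`
by deleting the parts equal to `a_i` or `a_i + 1` and decreasing by `2` every
part greater than `a_i + 1`. -/
def IsUProcess (r : ℕ) (np : ℕ →₀ ℕ) (Ps : ℕ → ℕ →₀ ℕ) (aa : ℕ → ℕ) : Prop :=
  Ps 1 = np ∧
    ∀ i, 1 ≤ i → i ≤ r →
      OptimalFor (Ps i) (aa i) ∧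
        ∀ m, Ps (i + 1) m = if m < aa i then Ps i m else Ps i (m + 2)

/-- The subset `C_i = (ι_1 ∘ ⋯ ∘ ι_{i−1})(U_{a_i}) ⊆ D_P` of a `U`-process. -/
def Cset (Ps : ℕ → ℕ →₀ ℕ) (aa : ℕ → ℕ) (i : ℕ) : Set Vtx :=
  iotaComp aa (i - 1) '' Sset (Ps i) 1 (aa i)

/-! ### Auxiliary material for Statement 9 -/

/-- Finset realization of `Sset np i a` (valid when `1 ≤ i` and `2*i ≤ a+1`). -/
def Sfin (np : ℕ →₀ ℕ) (i a : ℕ) : Finset Vtx :=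
  (Finset.Icc i (a + 1 - i)) ×ˢ (({a} : Finset ℕ) ×ˢ Finset.Icc 1 (np a)) ∪
  (Finset.Icc i (a + 2 - i)) ×ˢ (({a + 1} : Finset ℕ) ×ˢ Finset.Icc 1 (np (a + 1))) ∪
  (np.support.filter (fun p => a + 1 < p)).biUnion
    (fun p => ({i, p + 1 - i} : Finset ℕ) ×ˢ (({p} : Finset ℕ) ×ˢ Finset.Icc 1 (np p)))

lemma Sset_eq_Sfin (np : ℕ →₀ ℕ) (i a : ℕ) (h1 : 1 ≤ i) (h2 : 2 * i ≤ a + 1) :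
    Sset np i a = ↑(Sfin np i a) := by
  ext ⟨u, p, k⟩
  simp only [Sset, vertexSet, Set.mem_setOf_eq, Sfin, Finset.coe_union, Set.mem_union,
    Finset.mem_coe, Finset.mem_union, Finset.mem_product, Finset.mem_Icc, Finset.mem_singleton,
    Finset.mem_biUnion, Finset.mem_filter, Finsupp.mem_support_iff, Finset.mem_insert]
  constructor
  · rintro ⟨⟨hu1, hup, hk1, hk2⟩, hc⟩
    rcases hc with ⟨hp | hp, hiu, hui⟩ | ⟨hp, hu⟩
    · subst hp; exact Or.inl (Or.inl ⟨⟨hiu, by omega⟩, rfl, hk1, hk2⟩)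
    · subst hp; exact Or.inl (Or.inr ⟨⟨hiu, by omega⟩, rfl, hk1, hk2⟩)
    · exact Or.inr ⟨p, ⟨by omega, hp⟩, by omega, rfl, hk1, hk2⟩
  · rintro ((⟨⟨hiu, hui⟩, hp, hk1, hk2⟩ | ⟨⟨hiu, hui⟩, hp, hk1, hk2⟩) |
      ⟨q, ⟨hq0, hq⟩, hu, hp, hk1, hk2⟩)
    · subst hp; exact ⟨⟨by omega, by omega, hk1, hk2⟩, Or.inl ⟨Or.inl rfl, hiu, by omega⟩⟩
    · subst hp; exact ⟨⟨by omega, by omega, hk1, hk2⟩, Or.inl ⟨Or.inr rfl, hiu, by omega⟩⟩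
    · subst hp; exact ⟨⟨by omega, by omega, hk1, hk2⟩, Or.inr ⟨hq, by omega⟩⟩

lemma Sfin_card (np : ℕ →₀ ℕ) (i a : ℕ) (h1 : 1 ≤ i) (h2 : 2 * i ≤ a + 1) :
    (Sfin np i a).card = (a + 2 - 2 * i) * np a + (a + 3 - 2 * i) * np (a + 1)
      + 2 * ∑ p ∈ np.support.filter (fun p => a + 1 < p), np p := by
  classical
  have hAB : Disjoint
      ((Finset.Icc i (a + 1 - i)) ×ˢ (({a} : Finset ℕ) ×ˢ Finset.Icc 1 (np a)))
      ((Finset.Icc i (a + 2 - i)) ×ˢ (({a + 1} : Finset ℕ) ×ˢ Finset.Icc 1 (np (a + 1)))) := by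
    rw [Finset.disjoint_left]
    rintro ⟨u, p, k⟩ hA hB
    simp only [Finset.mem_product, Finset.mem_singleton, Finset.mem_Icc] at hA hB
    omega
  have hABC : Disjoint
      ((Finset.Icc i (a + 1 - i)) ×ˢ (({a} : Finset ℕ) ×ˢ Finset.Icc 1 (np a)) ∪
       (Finset.Icc i (a + 2 - i)) ×ˢ (({a + 1} : Finset ℕ) ×ˢ Finset.Icc 1 (np (a + 1))))
      ((np.support.filter (fun p => a + 1 < p)).biUnion
        (fun p => ({i, p + 1 - i} : Finset ℕ) ×ˢ (({p} : Finset ℕ) ×ˢ Finset.Icc 1 (np p)))) := by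
    rw [Finset.disjoint_left]
    rintro ⟨u, p, k⟩ hA hB
    simp only [Finset.mem_union, Finset.mem_product, Finset.mem_singleton, Finset.mem_Icc,
      Finset.mem_biUnion, Finset.mem_filter, Finsupp.mem_support_iff, Finset.mem_insert] at hA hB
    obtain ⟨q, ⟨-, hq⟩, -, rfl, -⟩ := hB
    omega
  have hdisjC : ∀ x ∈ np.support.filter (fun p => a + 1 < p),
      ∀ y ∈ np.support.filter (fun p => a + 1 < p), x ≠ y →
      Disjoint (({i, x + 1 - i} : Finset ℕ) ×ˢ (({x} : Finset ℕ) ×ˢ Finset.Icc 1 (np x)))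
        (({i, y + 1 - i} : Finset ℕ) ×ˢ (({y} : Finset ℕ) ×ˢ Finset.Icc 1 (np y))) := by
    intro x hx y hy hxy
    rw [Finset.disjoint_left]
    rintro ⟨u, p, k⟩ hA hB
    simp only [Finset.mem_product, Finset.mem_singleton, Finset.mem_Icc] at hA hB
    exact hxy (hA.2.1 ▸ hB.2.1 ▸ rfl)
  rw [Sfin, Finset.card_union_of_disjoint hABC, Finset.card_union_of_disjoint hAB,
    Finset.card_biUnion hdisjC]
  have cA : ((Finset.Icc i (a + 1 - i)) ×ˢ (({a} : Finset ℕ) ×ˢ Finset.Icc 1 (np a))).card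
      = (a + 2 - 2 * i) * np a := by
    rw [Finset.card_product, Finset.card_product, Nat.card_Icc, Nat.card_Icc,
      Finset.card_singleton]
    have e1 : a + 1 - i + 1 - i = a + 2 - 2 * i := by omega
    have e2 : np a + 1 - 1 = np a := by omega
    rw [e1, e2, one_mul]
  have cB : ((Finset.Icc i (a + 2 - i)) ×ˢ (({a + 1} : Finset ℕ) ×ˢ
      Finset.Icc 1 (np (a + 1)))).card = (a + 3 - 2 * i) * np (a + 1) := by
    rw [Finset.card_product, Finset.card_product, Nat.card_Icc, Nat.card_Icc,
      Finset.card_singleton]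
    have e1 : a + 2 - i + 1 - i = a + 3 - 2 * i := by omega
    have e2 : np (a + 1) + 1 - 1 = np (a + 1) := by omega
    rw [e1, e2, one_mul]
  have cC : ∑ p ∈ np.support.filter (fun p => a + 1 < p),
      ((({i, p + 1 - i} : Finset ℕ) ×ˢ (({p} : Finset ℕ) ×ˢ Finset.Icc 1 (np p))).card)
      = 2 * ∑ p ∈ np.support.filter (fun p => a + 1 < p), np p := by
    rw [Finset.mul_sum]
    refine Finset.sum_congr rfl fun p hp => ?_
    simp only [Finset.mem_filter, Finsupp.mem_support_iff] at hp
    rw [Finset.card_product, Finset.card_product, Nat.card_Icc, Finset.card_singleton,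
      Finset.card_insert_of_notMem (by simp only [Finset.mem_singleton]; omega),
      Finset.card_singleton]
    have e2 : np p + 1 - 1 = np p := by omega
    rw [e2]; ring
  rw [cA, cB, cC]

lemma Sset_disjoint (np : ℕ →₀ ℕ) {i j ai aj : ℕ} (hij : i < j)
    (h2j : 2 * j ≤ aj + 1) (hgap : ai + 2 ≤ aj) :
    Disjoint (Sset np i ai) (Sset np j aj) := by
  rw [Set.disjoint_left]
  rintro ⟨u, p, k⟩ hi hj
  simp only [Sset, vertexSet, Set.mem_setOf_eq] at hi hj
  omega

lemma ValidSeq.two_mul_le {b : ℕ → ℕ} {r : ℕ} (hb : ValidSeq b r) :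
    ∀ i, 1 ≤ i → i ≤ r → 2 * i ≤ b i + 1 := by
  intro i h1 h2
  induction i with
  | zero => omega
  | succ n ih =>
    rcases Nat.eq_zero_or_pos n with hn | hn
    · subst hn; have := hb.1 (0 + 1) (by omega) h2; omega
    · have h3 := ih hn (by omega)
      have h4 := hb.2 n hn (by omega)
      omega

lemma ValidSeq.gap {b : ℕ → ℕ} {r : ℕ} (hb : ValidSeq b r) :
    ∀ i j, 1 ≤ i → i < j → j ≤ r → b i + 2 ≤ b j := by
  intro i j h1 hij hjr
  induction j with
  | zero => omega
  | succ m ih =>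
    rcases Nat.lt_or_ge i m with h | h
    · have := ih (by omega) (by omega)
      have := hb.2 m (by omega) (by omega)
      omega
    · have : i = m := by omega
      subst this
      exact hb.2 i h1 (by omega)

lemma Sfin_disjoint (np : ℕ →₀ ℕ) {r : ℕ} {b : ℕ → ℕ} (hb : ValidSeq b r)
    {i j : ℕ} (h1 : 1 ≤ i) (hij : i < j) (hjr : j ≤ r) :
    Disjoint (Sfin np i (b i)) (Sfin np j (b j)) := by
  rw [← Finset.disjoint_coe,
    ← Sset_eq_Sfin np i (b i) h1 (hb.two_mul_le i h1 (by omega)),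
    ← Sset_eq_Sfin np j (b j) (by omega) (hb.two_mul_le j (by omega) hjr)]
  exact Sset_disjoint np hij (hb.two_mul_le j (by omega) hjr) (hb.gap i j h1 hij hjr)

lemma UChain_ncard (np : ℕ →₀ ℕ) (b : ℕ → ℕ) (r : ℕ) (hb : ValidSeq b r) :
    (UChain np b r).ncard = ∑ i ∈ Finset.Icc 1 r, (Sfin np i (b i)).card := by
  have hcoe : UChain np b r = ↑((Finset.Icc 1 r).biUnion fun i => Sfin np i (b i)) := by
    rw [UChain, Finset.coe_biUnion, ← Finset.coe_Icc]
    refine Set.iUnion_congr fun i => Set.iUnion_congr fun hi => ?_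
    have hi' : 1 ≤ i ∧ i ≤ r := Finset.mem_Icc.mp (Finset.mem_coe.mp hi)
    exact Sset_eq_Sfin np i (b i) hi'.1 (hb.two_mul_le i hi'.1 hi'.2)
  rw [hcoe, Set.ncard_coe_finset]
  refine Finset.card_biUnion ?_
  intro x hx y hy hxy
  simp only [Finset.coe_Icc, Set.mem_Icc, Finset.mem_coe, Finset.mem_Icc] at hx hy
  rcases Nat.lt_or_ge x y with h | h
  · exact Sfin_disjoint np hb hx.1 h hy.2
  · exact (Sfin_disjoint np hb hy.1 (by omega) hx.2).symm

lemma sum_support_split (np : ℕ →₀ ℕ) (a : ℕ) :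
    ∑ p ∈ np.support.filter (fun p => a < p), np p
      = np (a + 1) + ∑ p ∈ np.support.filter (fun p => a + 1 < p), np p := by
  classical
  by_cases h : np (a + 1) = 0
  · have hfe : np.support.filter (fun p => a < p) = np.support.filter (fun p => a + 1 < p) := by
      ext p
      simp only [Finset.mem_filter, Finsupp.mem_support_iff]
      constructor
      · rintro ⟨hp, hlt⟩
        refine ⟨hp, ?_⟩
        by_cases hpa : p = a + 1
        · exact absurd (hpa ▸ h) hp
        · omega
      · rintro ⟨hp, hlt⟩; exact ⟨hp, by omega⟩
    rw [hfe, h, Nat.zero_add]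
  · have hins : np.support.filter (fun p => a < p)
        = insert (a + 1) (np.support.filter (fun p => a + 1 < p)) := by
      ext p
      simp only [Finset.mem_insert, Finset.mem_filter, Finsupp.mem_support_iff]
      constructor
      · rintro ⟨hp, hlt⟩
        by_cases hpa : p = a + 1
        · exact Or.inl hpa
        · exact Or.inr ⟨hp, by omega⟩
      · rintro (rfl | ⟨hp, hlt⟩)
        · exact ⟨h, by omega⟩
        · exact ⟨hp, by omega⟩
    rw [hins, Finset.sum_insert (by simp)]

/-- Case 2.2 of Proposition 1.13: if `a = b_u + 1` (and `a ≤ b_{u+1} − 2`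
when `u < r`), then `b_1, …, b_{u−1}, a, b_{u+1}, …, b_r` defines an `r`-`U`-chain and
`|U_{b_1,…,b_{u−1},a,b_{u+1},…,b_r}| − |U_{b_1,…,b_r}| = (a − 2u + 1)·(n_{a+1} − n_{a−1})`. -/
theorem replacement_case_two_two
    (n : ℕ) (hn : 0 < n) (np : ℕ →₀ ℕ) (hP : IsPartitionOf n np)
    (r : ℕ) (b : ℕ → ℕ) (hb : ValidSeq b r)
    (u : ℕ) (hu1 : 1 ≤ u) (hur : u ≤ r)
    (a : ℕ) (ha : a = b u + 1) (hnext : u < r → a + 2 ≤ b (u + 1)) :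
    ValidSeq (fun j => if j = u then a else b j) r ∧
    ((UChain np (fun j => if j = u then a else b j) r).ncard : ℤ)
        - ((UChain np b r).ncard : ℤ)
      = ((a : ℤ) - 2 * (u : ℤ) + 1) * ((np (a + 1) : ℤ) - (np (a - 1) : ℤ)) := by
  have hb' : ValidSeq (fun j => if j = u then a else b j) r := by
    constructor
    · intro i h1 h2
      dsimp only
      split
      · omega
      · exact hb.1 i h1 h2
    · intro i h1 h2
      dsimp only
      split <;> rename_i hA
      · split <;> rename_i hB
        · omega
        · subst hA; exact hnext h2
      · split <;> rename_i hB
        · have h3 := hb.2 i h1 h2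
          rw [hB] at h3
          omega
        · exact hb.2 i h1 h2
  refine ⟨hb', ?_⟩
  rw [UChain_ncard np _ r hb', UChain_ncard np b r hb]
  push_cast
  rw [← Finset.sum_sub_distrib,
    Finset.sum_eq_single_of_mem u (Finset.mem_Icc.mpr ⟨hu1, hur⟩)
      (by intro i hi hne; simp only [if_neg hne, sub_self])]
  have hifu : (if u = u then a else b u) = a := if_pos rfl
  rw [hifu]
  have h2u : 2 * u ≤ b u + 1 := hb.two_mul_le u hu1 hur
  rw [Sfin_card np u a hu1 (by omega), Sfin_card np u (b u) hu1 h2u]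
  have hbu1 : b u + 1 = a := ha.symm
  have hbu : b u = a - 1 := by omega
  have e1 : ((a + 2 - 2 * u : ℕ) : ℤ) = (a : ℤ) + 2 - 2 * u := by omega
  have e2 : ((a + 3 - 2 * u : ℕ) : ℤ) = (a : ℤ) + 3 - 2 * u := by omega
  have e3 : ((b u + 2 - 2 * u : ℕ) : ℤ) = (a : ℤ) + 1 - 2 * u := by omega
  have e4 : ((b u + 3 - 2 * u : ℕ) : ℤ) = (a : ℤ) + 2 - 2 * u := by omega
  rw [hbu1, sum_support_split np a]
  push_cast
  rw [e1, e2, e3, e4, hbu]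
  ring
end

section
/- Let P be a partition of a positive integer n, let b_1 < b_2 < … < b_r be positive integers with b_{i+1} ≥ b_i + 2 for 1 ≤ i < r, let u ∈ {1, …, r}, and let a be a positive integer with b_u + 1 < a; if u < r assume moreover a < b_{u+1} − 1. Assume that s(P,a) ≥ s(P,c) for every integer c with b_u ≤ c ≤ a − 1. Then the sequence b_1, …, b_{u−1}, a, b_{u+1}, …, b_r defines an r-U-chain in D_P and |U_{b_1,…,b_{u−1},a,b_{u+1},…,b_r}| ≥ |U_{b_1,…,b_r}|. -/
/-! ### Auxiliary machinery for Statement 10 -/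

section Aux

open Finset

/-- The set of `u`-coordinates of the slice of `Sset np i c` at total value `p`. -/
def rowF (i c p : ℕ) : Finset ℕ :=
  if p ≤ c + 1 then Finset.Icc i (p + 1 - i) else {i, p + 1 - i}

/-- A `Finset` representation of `Sset np i c`. -/
def SF (np : ℕ →₀ ℕ) (i c : ℕ) : Finset Vtx :=
  (np.support.filter (fun p => c ≤ p)).biUnion
    (fun p => rowF i c p ×ˢ ({p} ×ˢ Finset.Icc 1 (np p)))

lemma SF_coe (np : ℕ →₀ ℕ) {i c : ℕ} (hi : 1 ≤ i) (hc : 2 * i ≤ c + 1) :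
    (SF np i c : Set Vtx) = Sset np i c := by
  ext ⟨w, p, k⟩
  simp only [Finset.mem_coe, SF, Finset.mem_biUnion, Finset.mem_filter,
    Finsupp.mem_support_iff, Finset.mem_product, Finset.mem_singleton, Finset.mem_Icc,
    Sset, vertexSet, Set.mem_setOf_eq]
  constructor
  · rintro ⟨q, ⟨hq0, hqc⟩, hw, rfl, hk1, hk2⟩
    have hnp : 1 ≤ np p := by omega
    rw [rowF] at hw
    split_ifs at hw with hpc
    · rw [Finset.mem_Icc] at hw
      refine ⟨⟨by omega, by omega, hk1, hk2⟩, Or.inl ⟨by omega, by omega, by omega⟩⟩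
    · simp only [Finset.mem_insert, Finset.mem_singleton] at hw
      refine ⟨⟨?_, ?_, hk1, hk2⟩, Or.inr ⟨by omega, by omega⟩⟩ <;> omega
  · rintro ⟨⟨hw1, hwp, hk1, hk2⟩, hcase⟩
    refine ⟨p, ⟨by omega, ?_⟩, ?_, rfl, hk1, hk2⟩
    · omega
    · rw [rowF]
      split_ifs with hpc
      · rw [Finset.mem_Icc]; omega
      · simp only [Finset.mem_insert, Finset.mem_singleton]; omega

lemma SF_card (np : ℕ →₀ ℕ) {i c : ℕ} (hi : 1 ≤ i) (hc : 2 * i ≤ c + 1) :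
    (SF np i c).card =
      ∑ p ∈ np.support.filter (fun p => c ≤ p),
        (if p ≤ c + 1 then p + 2 - 2 * i else 2) * np p := by
  rw [SF, Finset.card_biUnion]
  · refine Finset.sum_congr rfl fun p hp => ?_
    rw [Finset.mem_filter] at hp
    rw [Finset.card_product, Finset.card_product, Finset.card_singleton,
      Nat.card_Icc, one_mul]
    have hnp : np p + 1 - 1 = np p := by omega
    rw [hnp, rowF]
    split_ifs with h
    · rw [Nat.card_Icc]
      have : p + 1 - i + 1 - i = p + 2 - 2 * i := by omega
      rw [this]
    · rw [Finset.card_insert_of_notMem (by simp; omega), Finset.card_singleton]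
  · intro p hp q hq hpq
    rw [Function.onFun, Finset.disjoint_left]
    rintro ⟨w, p', k⟩ h1 h2
    simp only [Finset.mem_product, Finset.mem_singleton] at h1 h2
    exact hpq (h1.2.1 ▸ h2.2.1)

/-- Integer weight function. -/
def WZ (i c p : ℕ) : ℤ :=
  if p < c then 0 else if p ≤ c + 1 then (p : ℤ) + 2 - 2 * i else 2

/-- `GG np i c` is the (integer) cardinality of `Sset np i c`. -/
def GG (np : ℕ →₀ ℕ) (i c : ℕ) : ℤ := ∑ p ∈ np.support, WZ i c p * np p

lemma GG_eq_card (np : ℕ →₀ ℕ) {i c : ℕ} (hi : 1 ≤ i) (hc : 2 * i ≤ c + 1) :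
    GG np i c = ((SF np i c).card : ℤ) := by
  rw [SF_card np hi hc, GG, Nat.cast_sum, Finset.sum_filter]
  refine Finset.sum_congr rfl fun p hp => ?_
  rw [WZ]
  by_cases h1 : c ≤ p
  · rw [if_pos h1, if_neg (by omega)]
    by_cases h2 : p ≤ c + 1
    · rw [if_pos h2, if_pos h2, Nat.cast_mul]
      congr 1
      omega
    · rw [if_neg h2, if_neg h2, Nat.cast_mul]
      norm_num
  · rw [if_neg h1, if_pos (by omega), zero_mul]

lemma WZ_diff (i c p : ℕ) :
    WZ i (c + 1) p - WZ i c p =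
      (if p = c + 2 then ((c : ℤ) + 2 - 2 * i) else 0) -
      (if p = c then ((c : ℤ) + 2 - 2 * i) else 0) := by
  rw [WZ, WZ]
  split_ifs <;> omega

lemma sum_indicator (np : ℕ →₀ ℕ) (f : ℕ → ℤ) (c : ℕ) :
    (∑ p ∈ np.support, if p = c then f p * np p else 0) = f c * np c := by
  rw [Finset.sum_ite_eq' np.support c (fun p => f p * (np p : ℤ))]
  split_ifs with h
  · rfl
  · rw [Finsupp.notMem_support_iff] at h
    rw [h]
    norm_num

lemma GG_diff (np : ℕ →₀ ℕ) (i c : ℕ) :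
    GG np i (c + 1) - GG np i c
      = ((c : ℤ) + 2 - 2 * i) * ((np (c + 2) : ℤ) - np c) := by
  rw [GG, GG, ← Finset.sum_sub_distrib]
  have key : ∀ p ∈ np.support, WZ i (c + 1) p * (np p : ℤ) - WZ i c p * np p =
      (if p = c + 2 then ((c : ℤ) + 2 - 2 * i) * np p else 0) -
      (if p = c then ((c : ℤ) + 2 - 2 * i) * np p else 0) := by
    intro p _
    have h := WZ_diff i c p
    have h2 : WZ i (c + 1) p * (np p : ℤ) - WZ i c p * np p
        = (WZ i (c + 1) p - WZ i c p) * np p := by ring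
    rw [h2, h]
    split_ifs <;> ring
  rw [Finset.sum_congr rfl key, Finset.sum_sub_distrib, sum_indicator, sum_indicator]
  ring

lemma sum_pair_support (s : Finset ℕ) (f : ℕ → ℤ) {c d : ℕ} (hcd : c ≠ d)
    (h0 : ∀ p ∈ s, f p ≠ 0 → p = c ∨ p = d)
    (hc : c ∉ s → f c = 0) (hd : d ∉ s → f d = 0) :
    ∑ p ∈ s, f p = f c + f d := by
  have key : ∀ p ∈ s, f p = (if p = c then f p else 0) + (if p = d then f p else 0) := by
    intro p hp
    by_cases h1 : p = c
    · subst h1; rw [if_pos rfl, if_neg hcd]; ring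
    · by_cases h2 : p = d
      · subst h2; rw [if_neg h1, if_pos rfl]; ring
      · rw [if_neg h1, if_neg h2]
        by_cases h3 : f p = 0
        · rw [h3]; ring
        · rcases h0 p hp h3 with h | h
          · exact absurd h h1
          · exact absurd h h2
  rw [Finset.sum_congr rfl key, Finset.sum_add_distrib,
    Finset.sum_ite_eq' s c f, Finset.sum_ite_eq' s d f]
  by_cases h1 : c ∈ s
  · by_cases h2 : d ∈ s
    · rw [if_pos h1, if_pos h2]
    · rw [if_pos h1, if_neg h2, hd h2]
  · by_cases h2 : d ∈ s
    · rw [if_neg h1, if_pos h2, hc h1]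
    · rw [if_neg h1, if_neg h2, hc h1, hd h2]

lemma GG_one (np : ℕ →₀ ℕ) (c : ℕ) : GG np 1 c = (sVal np c : ℤ) := by
  rw [GG, sVal]
  push_cast
  rw [← Finset.sum_filter_add_sum_filter_not np.support (fun p => c + 1 < p)]
  have h1 : ∑ p ∈ np.support.filter (fun p => c + 1 < p), WZ 1 c p * (np p : ℤ)
      = 2 * ∑ p ∈ np.support.filter (fun p => c + 1 < p), (np p : ℤ) := by
    rw [Finset.mul_sum]
    refine Finset.sum_congr rfl fun p hp => ?_
    rw [Finset.mem_filter] at hp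
    rw [WZ, if_neg (by omega), if_neg (by omega)]
  have h2 : ∑ p ∈ np.support.filter (fun p => ¬ c + 1 < p), WZ 1 c p * (np p : ℤ)
      = (c : ℤ) * np c + ((c : ℤ) + 1) * np (c + 1) := by
    rw [sum_pair_support _ _ (show c ≠ c + 1 by omega)]
    · rw [WZ, if_neg (by omega), if_pos (by omega),
        WZ, if_neg (by omega), if_pos (by omega)]
      push_cast
      ring
    · intro p hp hne
      rw [Finset.mem_filter] at hp
      by_cases hpc : p < c
      · exact absurd (by rw [WZ, if_pos hpc, zero_mul]) hne
      · omega
    · intro hcn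
      have hz : np c = 0 := by
        by_contra h
        exact hcn (Finset.mem_filter.mpr ⟨Finsupp.mem_support_iff.mpr h, by omega⟩)
      rw [hz]
      norm_num
    · intro hcn
      have hz : np (c + 1) = 0 := by
        by_contra h
        exact hcn (Finset.mem_filter.mpr ⟨Finsupp.mem_support_iff.mpr h, by omega⟩)
      rw [hz]
      norm_num
  rw [h1, h2]
  ring

lemma key_ineq (np : ℕ →₀ ℕ) (u bb aa : ℕ) (hu : 1 ≤ u) (hbb : 2 * u ≤ bb + 1)
    (hba : bb ≤ aa)
    (hmax : ∀ c, bb ≤ c → c ≤ aa → GG np 1 c ≤ GG np 1 aa) :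
    GG np u bb ≤ GG np u aa := by
  have claim : ∀ d, d ≤ aa - bb →
      (((aa - d : ℕ) : ℤ) + 2 - 2 * u) * (GG np 1 aa - GG np 1 (aa - d)) ≤
        ((aa - d : ℕ) : ℤ) * (GG np u aa - GG np u (aa - d)) := by
    intro d
    induction d with
    | zero => intro _; simp
    | succ d ih =>
      intro hd
      have ih' := ih (by omega)
      set c := aa - (d + 1) with hcdef
      have hc1 : aa - d = c + 1 := by omega
      have hcb : bb ≤ c := by omega
      have hca : c + 1 ≤ aa := by omega
      rw [hc1] at ih'
      push_cast at ih'
      have hY : 0 ≤ GG np 1 aa - GG np 1 (c + 1) := by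
        have := hmax (c + 1) (by omega) (by omega); linarith
      have hcu : 2 * (u : ℤ) ≤ (c : ℤ) + 1 := by exact_mod_cast (by omega : 2 * u ≤ c + 1)
      have hu1 : (1 : ℤ) ≤ (u : ℤ) := by exact_mod_cast hu
      set X := GG np u aa - GG np u (c + 1) with hX
      set Y := GG np 1 aa - GG np 1 (c + 1) with hYd
      have hc0 : (0 : ℤ) ≤ (c : ℤ) := by positivity
      have t1 : (0 : ℤ) ≤ (c : ℤ) * (((c : ℤ) + 1) * X - ((c : ℤ) + 3 - 2 * u) * Y) := by
        apply mul_nonneg hc0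
        nlinarith [ih']
      have t2 : (0 : ℤ) ≤ (2 * (u : ℤ) - 2) * Y := by
        apply mul_nonneg (by linarith) hY
      have hstep : ((c : ℤ) + 2 - 2 * u) * Y ≤ (c : ℤ) * X := by
        nlinarith [t1, t2, hY]
      have g1 : GG np u aa - GG np u c
          = X + ((c : ℤ) + 2 - 2 * u) * ((np (c + 2) : ℤ) - np c) := by
        have := GG_diff np u c
        rw [hX]
        linarith
      have g2 : GG np 1 aa - GG np 1 c
          = Y + (c : ℤ) * ((np (c + 2) : ℤ) - np c) := by
        have h := GG_diff np 1 c
        have h' : GG np 1 (c + 1) - GG np 1 c = (c : ℤ) * ((np (c + 2) : ℤ) - np c) := by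
          rw [h]; push_cast; ring
        rw [hYd]
        linarith
      rw [g1, g2]
      nlinarith [hstep]
  have h0 := claim (aa - bb) le_rfl
  have hbbe : aa - (aa - bb) = bb := by omega
  rw [hbbe] at h0
  have hB : 0 ≤ GG np 1 aa - GG np 1 bb := by
    have := hmax bb le_rfl hba; linarith
  have hbz : (1 : ℤ) ≤ (bb : ℤ) := by exact_mod_cast (by omega : 1 ≤ bb)
  have hco : (1 : ℤ) ≤ (bb : ℤ) + 2 - 2 * u := by
    have : (2 * u : ℤ) ≤ (bb : ℤ) + 1 := by exact_mod_cast hbb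
    linarith
  nlinarith [h0, hB, hbz, hco]

lemma sVal_card_le (np : ℕ →₀ ℕ) (u bb aa : ℕ) (hu : 1 ≤ u) (hbb : 2 * u ≤ bb + 1)
    (hba : bb ≤ aa)
    (hmax : ∀ c, bb ≤ c → c ≤ aa → sVal np c ≤ sVal np aa) :
    (SF np u bb).card ≤ (SF np u aa).card := by
  have h := key_ineq np u bb aa hu hbb hba (fun c h1 h2 => by
    rw [GG_one np c, GG_one np aa]
    exact_mod_cast hmax c h1 h2)
  rw [GG_eq_card np hu hbb, GG_eq_card np hu (by omega)] at h
  exact_mod_cast h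

lemma Sset_disjoint_lt (np : ℕ →₀ ℕ) {i u c d : ℕ} (hiu : i < u) (hi : 1 ≤ i)
    (hdc : d + 2 ≤ c) (hc : 2 * u ≤ c + 1) :
    Disjoint (Sset np u c) (Sset np i d) := by
  rw [Set.disjoint_left]
  rintro ⟨w, p, k⟩ h1 h2
  simp only [Sset, vertexSet, Set.mem_setOf_eq] at h1 h2
  omega

lemma Sset_disjoint_gt (np : ℕ →₀ ℕ) {i u c d : ℕ} (hiu : u < i) (hu : 1 ≤ u)
    (hcd : c + 2 ≤ d) (hd : 2 * i ≤ d + 1) :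
    Disjoint (Sset np u c) (Sset np i d) := by
  rw [Set.disjoint_left]
  rintro ⟨w, p, k⟩ h1 h2
  simp only [Sset, vertexSet, Set.mem_setOf_eq] at h1 h2
  omega

lemma ValidSeq.mono {b : ℕ → ℕ} {r : ℕ} (hb : ValidSeq b r) :
    ∀ i j, 1 ≤ i → i ≤ j → j ≤ r → b i + 2 * (j - i) ≤ b j := by
  intro i j hi hij hjr
  obtain ⟨d, rfl⟩ : ∃ d, j = i + d := ⟨j - i, by omega⟩
  clear hij
  induction d with
  | zero => simp
  | succ d ih =>
    have h1 := ih (by omega)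
    have h2 := hb.2 (i + d) (by omega) (by omega)
    have e : i + (d + 1) = i + d + 1 := by omega
    rw [e]
    omega

lemma ValidSeq.lb {b : ℕ → ℕ} {r : ℕ} (hb : ValidSeq b r) :
    ∀ j, 1 ≤ j → j ≤ r → 2 * j ≤ b j + 1 := by
  intro j h1 h2
  have := ValidSeq.mono hb 1 j le_rfl h1 h2
  have := hb.1 1 le_rfl (by omega)
  omega

end Aux
/-- Case 2.3 of Proposition 1.13: if `b_u + 1 < a` (and `a < b_{u+1} − 1`
when `u < r`) and `s(P,a) ≥ s(P,c)` for all `b_u ≤ c ≤ a − 1`, then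
`b_1, …, b_{u−1}, a, b_{u+1}, …, b_r` defines an `r`-`U`-chain whose cardinality is at
least `|U_{b_1,…,b_r}|`. -/
theorem replacement_case_two_three
    (n : ℕ) (hn : 0 < n) (np : ℕ →₀ ℕ) (hP : IsPartitionOf n np)
    (r : ℕ) (b : ℕ → ℕ) (hb : ValidSeq b r)
    (u : ℕ) (hu1 : 1 ≤ u) (hur : u ≤ r)
    (a : ℕ) (ha : b u + 1 < a) (hnext : u < r → a + 1 < b (u + 1))
    (hmax : ∀ c, b u ≤ c → c < a → sVal np c ≤ sVal np a) :
    ValidSeq (fun j => if j = u then a else b j) r ∧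
    (UChain np b r).ncard ≤
      (UChain np (fun j => if j = u then a else b j) r).ncard := by
  have hlb := ValidSeq.lb hb
  have hmono := ValidSeq.mono hb
  have hbu1 : 1 ≤ b u := hb.1 u hu1 hur
  have hbulb : 2 * u ≤ b u + 1 := hlb u hu1 hur
  set b' : ℕ → ℕ := fun j => if j = u then a else b j with hb'def
  have hb'u : b' u = a := if_pos rfl
  have hb'ne : ∀ i, i ≠ u → b' i = b i := fun i h => if_neg h
  have hvalid : ValidSeq b' r := by
    constructor
    · intro i h1 h2
      by_cases h : i = u
      · rw [hb'def]; simp only [if_pos h]; omega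
      · rw [hb'ne i h]; exact hb.1 i h1 h2
    · intro i h1 h2
      have hstep := hb.2 i h1 h2
      rw [hb'def]
      simp only
      split_ifs with hA hB hB
      · omega
      · subst hA
        have := hnext (by omega)
        omega
      · have : b (i + 1) = b u := by rw [hB]
        omega
      · exact hstep
  refine ⟨hvalid, ?_⟩
  -- split off the `u`-th piece
  set T : Set Vtx := ⋃ i ∈ Set.Icc 1 r \ {u}, Sset np i (b i) with hT
  have hins : Set.Icc 1 r = insert u (Set.Icc 1 r \ {u}) := by
    rw [Set.insert_diff_singleton, Set.insert_eq_of_mem (Set.mem_Icc.mpr ⟨hu1, hur⟩)]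
  have hU1 : UChain np b r = Sset np u (b u) ∪ T := by
    rw [UChain, hins, Set.biUnion_insert]
  have hU2 : UChain np b' r = Sset np u a ∪ T := by
    rw [UChain, hins, Set.biUnion_insert, hb'u, hT]
    congr 1
    refine Set.iUnion₂_congr fun i hi => ?_
    rw [hb'ne i (by simpa using hi.2)]
  -- finiteness
  have hfinS : ∀ i c, 1 ≤ i → 2 * i ≤ c + 1 → (Sset np i c).Finite := by
    intro i c h1 h2
    rw [← SF_coe np h1 h2]
    exact (SF np i c).finite_toSet
  have hfinT : T.Finite := by
    refine Set.Finite.biUnion ((Set.finite_Icc 1 r).diff (t := {u})) fun i hi => ?_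
    obtain ⟨hi1, _⟩ := hi
    rw [Set.mem_Icc] at hi1
    exact hfinS i (b i) hi1.1 (hlb i hi1.1 hi1.2)
  -- disjointness
  have hdisj : ∀ c, 2 * u ≤ c + 1 → b u ≤ c → (u < r → c + 2 ≤ b (u + 1)) →
      Disjoint (Sset np u c) T := by
    intro c hc1 hc2 hc3
    rw [hT, Set.disjoint_iUnion₂_right]
    intro i hi
    obtain ⟨hi1, hi2⟩ := hi
    rw [Set.mem_Icc] at hi1
    have hine : i ≠ u := by simpa using hi2
    rcases lt_or_gt_of_ne hine with h | h
    · refine Sset_disjoint_lt np h hi1.1 ?_ hc1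
      have := hmono i u hi1.1 (by omega) hur
      omega
    · refine Sset_disjoint_gt np h hu1 ?_ (hlb i hi1.1 hi1.2)
      have hur' : u < r := by omega
      have h3 := hc3 hur'
      have := hmono (u + 1) i (by omega) (by omega) hi1.2
      omega
  have hdisj1 : Disjoint (Sset np u (b u)) T :=
    hdisj (b u) hbulb le_rfl (fun h => hb.2 u hu1 h)
  have hdisj2 : Disjoint (Sset np u a) T :=
    hdisj a (by omega) (by omega) (fun h => by have := hnext h; omega)
  rw [hU1, hU2, Set.ncard_union_eq hdisj1 (hfinS u (b u) hu1 hbulb) hfinT,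
    Set.ncard_union_eq hdisj2 (hfinS u a hu1 (by omega)) hfinT]
  have hcard : (Sset np u (b u)).ncard ≤ (Sset np u a).ncard := by
    rw [← SF_coe np hu1 hbulb, ← SF_coe np hu1 (by omega : 2 * u ≤ a + 1),
      Set.ncard_coe_finset, Set.ncard_coe_finset]
    refine sVal_card_le np u (b u) a hu1 hbulb (by omega) fun c h1 h2 => ?_
    rcases eq_or_lt_of_le h2 with rfl | h3
    · exact le_rfl
    · exact hmax c h1 h3
  omega
end
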